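/- arXiv:1310.5714 — 2 statements merged into one kernel-verified Lean document; each statement's English description precedes it below -/
import Mathlib

section
/- Let F be any CNF. If F has a Resolution refutation of width w and size S, then F has a tree-like Res(w) refutation with at most 5·S nodes. -/
/-- Propositional variables. -/
abbrev PVar := ℕ

/-- A literal: a variable together with a sign (`true` = the positive literal `x`,
`false` = the negated literal `¬x`). -/
abbrev PLit := PVar × Bool

/-- Negation of a literal. -/
def PLit.neg (m : PLit) : PLit := (m.1, !m.2)

/-- A clause: a finite set of literals, read as their disjunction.
Its width is its cardinality. -/
abbrev PClause := Finset PLit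

/-- A CNF formula: a finite set of clauses, read as their conjunction. -/
abbrev PCnf := Finset PClause

/-- A term: a finite set of literals, read as their conjunction. -/
abbrev PTerm := Finset PLit

/-- A DNF: a finite set of terms, read as their disjunction. -/
abbrev PDnf := Finset PTerm

/-- `D` is an `l`-DNF: every term of `D` has at most `l` literals. -/
def IsLDnf (l : ℕ) (D : PDnf) : Prop := ∀ T ∈ D, T.card ≤ l

/-- The negation `¬C` of a clause `C = m₁ ∨ … ∨ m_t`, i.e. the term `¬m₁ ∧ … ∧ ¬m_t`. -/
def PClause.negTerm (C : PClause) : PTerm := C.image PLit.neg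

/-- A clause viewed as a DNF consisting of singleton terms. -/
def PClause.toDnf (C : PClause) : PDnf := C.image (fun m => ({m} : PTerm))

/-- The disjunction `¬l₁ ∨ … ∨ ¬l_s` of the negations of the literals of the
term `T = l₁ ∧ … ∧ l_s`, as a DNF of singleton terms. -/
def PTerm.negLits (T : PTerm) : PDnf := T.image (fun m => ({m.neg} : PTerm))

/-- Binary proof trees whose nodes are labelled by DNFs. -/
inductive PTree : Type where
  | leaf (D : PDnf) : PTree
  | node (D : PDnf) (t₁ t₂ : PTree) : PTree

namespace PTree

/-- The label at the root of the tree. -/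
def concl : PTree → PDnf
  | .leaf D => D
  | .node D _ _ => D

/-- The number of leaves of the tree. -/
def leaves : PTree → ℕ
  | .leaf _ => 1
  | .node _ t₁ t₂ => t₁.leaves + t₂.leaves

/-- The total number of nodes (proof lines) of the tree. -/
def size : PTree → ℕ
  | .leaf _ => 1
  | .node _ t₁ t₂ => t₁.size + t₂.size + 1

/-- The list of all labels occurring in the tree. -/
def labels : PTree → List PDnf
  | .leaf D => [D]
  | .node D t₁ t₂ => D :: (t₁.labels ++ t₂.labels)

/-- Structural validity of a tree-like Res derivation from the set `H` of
hypothesis DNFs: every leaf is a hypothesis or an axiom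
`(l₁∧…∧l_s) ∨ ¬l₁ ∨ … ∨ ¬l_s` (with `s ≥ 1`), and every internal node with
children `A ∨ (l₁∧…∧l_s)` and `B ∨ ¬l₁ ∨ … ∨ ¬l_s` is labelled by the
cut `A ∨ B`. -/
def okStruct (H : Finset PDnf) : PTree → Prop
  | .leaf D => D ∈ H ∨ ∃ T : PTerm, T.Nonempty ∧ D = insert T T.negLits
  | .node D t₁ t₂ => t₁.okStruct H ∧ t₂.okStruct H ∧
      ∃ (T : PTerm) (A B : PDnf), T.Nonempty ∧
        t₁.concl = insert T A ∧ t₂.concl = B ∪ T.negLits ∧ D = A ∪ B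

/-- A valid tree-like Res(l) derivation from the hypotheses `H`: it is
structurally valid and every proof line is an `l`-DNF. -/
def valid (H : Finset PDnf) (l : ℕ) (t : PTree) : Prop :=
  t.okStruct H ∧ ∀ D ∈ t.labels, IsLDnf l D

/-- The number of leaves labelled by an axiom rather than by a hypothesis. -/
def axLeafCount (H : Finset PDnf) : PTree → ℕ
  | .leaf D => if D ∈ H then 0 else 1
  | .node _ t₁ t₂ => t₁.axLeafCount H + t₂.axLeafCount H

end PTree

/-- The set of hypothesis DNFs associated to a CNF: each clause read as a DNF
of singleton terms. -/
def PCnf.toHyps (F : PCnf) : Finset PDnf := F.image PClause.toDnf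

/-- `t` is a tree-like Res(l) refutation of the CNF `F`: a valid tree-like
Res(l) derivation from the clauses of `F` whose root is the empty DNF. -/
def TreeResRefutation (F : PCnf) (l : ℕ) (t : PTree) : Prop :=
  t.valid F.toHyps l ∧ t.concl = ∅

/-- Resolution inference: the clause `C` is obtained from two clauses
`A ∨ x` and `B ∨ ¬x` occurring in `prev` by the resolution rule, yielding `A ∨ B`. -/
def ResStep (prev : List PClause) (C : PClause) : Prop :=
  ∃ A ∈ prev, ∃ B ∈ prev, ∃ x : PVar,
    (x, true) ∈ A ∧ (x, false) ∈ B ∧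
    C = A.erase (x, true) ∪ B.erase (x, false)

/-- `π` is a resolution derivation from the CNF `F`: every clause of `π`
belongs to `F` or follows from two earlier clauses by the resolution rule. -/
def IsResDeriv (F : PCnf) (π : List PClause) : Prop :=
  ∀ i : Fin π.length, π.get i ∈ F ∨ ResStep (π.take i) (π.get i)

/-- `π` is a resolution derivation of the clause `C` from the CNF `F`
(its last clause is `C`); a refutation when `C = ∅`. Its size is `π.length`
and its width is the maximum cardinality of a clause in `π`. -/
def ResDerivOf (F : PCnf) (C : PClause) (π : List PClause) : Prop :=
  IsResDeriv F π ∧ π.getLast? = some C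

/-- A partial assignment: maps some variables to truth values. -/
abbrev PAssign := PVar → Option Bool

/-- The restriction `F|ρ`: delete every clause containing a literal satisfied
by `ρ`, and delete from the remaining clauses every literal falsified by `ρ`. -/
def PCnf.restrict (F : PCnf) (ρ : PAssign) : PCnf :=
  (F.filter (fun C => ∀ m ∈ C, ρ m.1 ≠ some m.2)).image
    (fun C => C.filter (fun m => ρ m.1 ≠ some (!m.2)))


section Aux

lemma PLit.neg_neg (m : PLit) : m.neg.neg = m := by
  simp [PLit.neg]

lemma PLit.neg_injective : Function.Injective PLit.neg := by
  intro a b h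
  have := congrArg PLit.neg h
  simpa [PLit.neg_neg] using this

lemma negLits_negTerm (C : PClause) : C.negTerm.negLits = C.toDnf := by
  unfold PClause.negTerm PTerm.negLits PClause.toDnf
  rw [Finset.image_image]
  apply Finset.image_congr
  intro m _
  simp [Function.comp, PLit.neg_neg]

lemma card_negTerm (C : PClause) : C.negTerm.card = C.card :=
  Finset.card_image_of_injective _ PLit.neg_injective

lemma negTerm_nonempty {C : PClause} (h : C.Nonempty) : C.negTerm.Nonempty :=
  h.image _

lemma finset_union_singleton {α : Type*} [DecidableEq α] (s : Finset α) (a : α) :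
    s ∪ {a} = insert a s := by
  ext x; simp [or_comm]

lemma toDnf_insert_erase {C : PClause} {m : PLit} (hm : m ∈ C) :
    C.toDnf = insert ({m} : PTerm) (PClause.toDnf (C.erase m)) := by
  conv_lhs => rw [← Finset.insert_erase hm]
  unfold PClause.toDnf
  rw [Finset.image_insert]

lemma isLDnf_toDnf {w : ℕ} (hw : 1 ≤ w) (C : PClause) : IsLDnf w C.toDnf := by
  intro T hT
  unfold PClause.toDnf at hT
  obtain ⟨m, _, rfl⟩ := Finset.mem_image.mp hT
  simpa using hw

/-- The constant-size gadget deriving `¬A ∨ ¬B ∨ C` for a resolution step. -/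
lemma gadget_lemma (w : ℕ) (H : Finset PDnf) (x : PVar) (A B C : PClause)
    (hxA : (x, true) ∈ A) (hxB : (x, false) ∈ B)
    (hC : C = A.erase (x, true) ∪ B.erase (x, false))
    (hA : A.card ≤ w) (hB : B.card ≤ w) (hCw : C.card ≤ w) :
    ∃ g : PTree, g.concl = {A.negTerm, B.negTerm} ∪ C.toDnf ∧ g.okStruct H ∧
      (∀ D ∈ g.labels, IsLDnf w D) ∧ g.size = 3 := by
  have hw1 : 1 ≤ w := le_trans (Finset.card_pos.mpr ⟨_, hxA⟩) hA
  have hAne : A.Nonempty := ⟨_, hxA⟩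
  have hBne : B.Nonempty := ⟨_, hxB⟩
  refine ⟨PTree.node ({A.negTerm, B.negTerm} ∪ C.toDnf)
      (.leaf (insert A.negTerm A.toDnf)) (.leaf (insert B.negTerm B.toDnf)),
      rfl, ?_, ?_, rfl⟩
  · refine ⟨Or.inr ⟨A.negTerm, negTerm_nonempty hAne, by rw [negLits_negTerm]⟩,
      Or.inr ⟨B.negTerm, negTerm_nonempty hBne, by rw [negLits_negTerm]⟩,
      ({(x, true)} : PTerm),
      insert A.negTerm (PClause.toDnf (A.erase (x, true))),
      insert B.negTerm (PClause.toDnf (B.erase (x, false))),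
      Finset.singleton_nonempty _, ?_, ?_, ?_⟩
    · show insert A.negTerm A.toDnf = _
      rw [toDnf_insert_erase hxA, Finset.insert_comm]
    · show insert B.negTerm B.toDnf = _
      have hneg : (({(x, true)} : PTerm)).negLits = {({(x, false)} : PTerm)} := by
        unfold PTerm.negLits
        rw [Finset.image_singleton]
        simp [PLit.neg]
      rw [hneg, Finset.insert_union, finset_union_singleton,
        ← toDnf_insert_erase hxB]
    · rw [hC]
      show _ = insert A.negTerm _ ∪ insert B.negTerm _
      rw [Finset.insert_union, Finset.union_insert]
      have : PClause.toDnf (A.erase (x, true) ∪ B.erase (x, false))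
          = PClause.toDnf (A.erase (x, true)) ∪ PClause.toDnf (B.erase (x, false)) := by
        unfold PClause.toDnf; exact Finset.image_union _ _
      rw [this]
      ext T
      simp only [Finset.mem_insert, Finset.mem_union, Finset.mem_singleton]
      tauto
  · intro D hD
    have hcase : D = {A.negTerm, B.negTerm} ∪ C.toDnf ∨
        D = insert A.negTerm A.toDnf ∨ D = insert B.negTerm B.toDnf := by
      simpa [PTree.labels] using hD
    intro T hT
    rcases hcase with rfl | rfl | rfl
    · rcases Finset.mem_union.mp hT with h | h
      · rcases Finset.mem_insert.mp h with rfl | h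
        · rw [card_negTerm]; exact hA
        · rw [Finset.mem_singleton.mp h, card_negTerm]; exact hB
      · exact isLDnf_toDnf hw1 C T h
    · rcases Finset.mem_insert.mp hT with rfl | h
      · rw [card_negTerm]; exact hA
      · exact isLDnf_toDnf hw1 A T h
    · rcases Finset.mem_insert.mp hT with rfl | h
      · rw [card_negTerm]; exact hB
      · exact isLDnf_toDnf hw1 B T h

end Aux


/-- Main induction: peel the resolution derivation from the end, maintaining a
tree deriving the disjunction of the negations of the still-needed clauses. -/
lemma chain_lemma (w : ℕ) (F : PCnf) :
    ∀ L : List PClause,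
      (∀ i : Fin L.length, L.get i ∈ F ∨ ResStep (L.take i) (L.get i)) →
      (∀ C ∈ L, C.card ≤ w) → (∀ C ∈ L, C ≠ ∅) →
      ∀ Γ : PDnf, (∀ T ∈ Γ, ∃ C ∈ L, T = PClause.negTerm C) →
      ∀ t : PTree, t.concl = Γ → t.okStruct F.toHyps →
        (∀ D ∈ t.labels, IsLDnf w D) →
      ∃ t' : PTree, t'.concl = ∅ ∧ t'.okStruct F.toHyps ∧
        (∀ D ∈ t'.labels, IsLDnf w D) ∧ t'.size ≤ t.size + 4 * L.length := by
  intro L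
  induction L using List.reverseRecOn with
  | nil =>
    intro _ _ _ Γ hΓ t ht hok hlab
    have : Γ = ∅ := by
      apply Finset.eq_empty_of_forall_notMem
      intro T hT
      obtain ⟨C, hC, _⟩ := hΓ T hT
      simp at hC
    exact ⟨t, by rw [ht, this], hok, hlab, by omega⟩
  | append_singleton L' C IH =>
    intro hL hw hne Γ hΓ t ht hok hlab
    have hL' : ∀ i : Fin L'.length, L'.get i ∈ F ∨ ResStep (L'.take i) (L'.get i) := by
      intro ⟨i, hi⟩
      have hi' : i < (L' ++ [C]).length := by simp; omega
      have h := hL ⟨i, hi'⟩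
      have hget : (L' ++ [C]).get ⟨i, hi'⟩ = L'.get ⟨i, hi⟩ := by
        show (L' ++ [C])[i] = L'[i]
        exact List.getElem_append_left hi
      have htake : (L' ++ [C]).take i = L'.take i :=
        List.take_append_of_le_length (le_of_lt hi)
      rw [hget, htake] at h
      exact h
    have hw' : ∀ C' ∈ L', C'.card ≤ w := fun C' h => hw C' (by simp [h])
    have hne' : ∀ C' ∈ L', C' ≠ ∅ := fun C' h => hne C' (by simp [h])
    by_cases hmem : PClause.negTerm C ∈ Γ
    · -- the clause C is needed: peel it with a cut
      have hCne : C.Nonempty :=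
        Finset.nonempty_iff_ne_empty.mpr (hne C (by simp))
      have hTne : (PClause.negTerm C).Nonempty := negTerm_nonempty hCne
      have hw1 : 1 ≤ w := le_trans (Finset.card_pos.mpr hCne) (hw C (by simp))
      have hΓw : ∀ T ∈ Γ, T.card ≤ w := by
        intro T hT
        obtain ⟨C', hC', rfl⟩ := hΓ T hT
        rw [card_negTerm]
        exact hw C' hC'
      -- the last step of the derivation
      have hlast : C ∈ F ∨ ResStep L' C := by
        have hlen : L'.length < (L' ++ [C]).length := by simp
        have h := hL ⟨L'.length, hlen⟩
        have hget : (L' ++ [C]).get ⟨L'.length, hlen⟩ = C := by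
          simp [List.getElem_concat_length]
        have htake : (L' ++ [C]).take L'.length = L' := List.take_left ..
        rw [hget, htake] at h
        exact h
      rcases hlast with hF | hres
      · -- hypothesis case
        set Γ' : PDnf := Γ.erase (PClause.negTerm C) with hΓ'def
        refine IH hL' hw' hne' Γ' ?_ (PTree.node Γ' t (.leaf C.toDnf)) rfl ?_ ?_ |>.imp
          fun t' ⟨h1, h2, h3, h4⟩ => ⟨h1, h2, h3, by
            simp only [PTree.size] at h4 ⊢; simp; omega⟩
        · intro T hT
          have hT' := Finset.mem_of_mem_erase hT
          obtain ⟨C', hC', rfl⟩ := hΓ T hT'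
          rcases (by simpa using hC' : C' ∈ L' ∨ C' = C) with h | rfl
          · exact ⟨C', h, rfl⟩
          · exact absurd rfl (Finset.ne_of_mem_erase hT)
        · refine ⟨hok, Or.inl ?_, PClause.negTerm C, Γ', ∅, hTne, ?_, ?_, ?_⟩
          · exact Finset.mem_image_of_mem _ hF
          · rw [ht, Finset.insert_erase hmem]
          · show C.toDnf = ∅ ∪ _
            rw [Finset.empty_union, negLits_negTerm]
          · rw [Finset.union_empty]
        · intro D hD
          rcases (by simpa [PTree.labels] using hD :
              D = Γ' ∨ D ∈ t.labels ∨ D = C.toDnf) with rfl | h | rfl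
          · exact fun T hT => hΓw T (Finset.mem_of_mem_erase hT)
          · exact hlab D h
          · exact isLDnf_toDnf hw1 C
      · -- resolution case
        obtain ⟨A, hAmem, B, hBmem, x, hxA, hxB, hCeq⟩ := hres
        obtain ⟨g, hg1, hg2, hg3, hg4⟩ := gadget_lemma w F.toHyps x A B C hxA hxB hCeq
          (hw' A hAmem) (hw' B hBmem) (hw C (by simp))
        set Γ' : PDnf := Γ.erase (PClause.negTerm C) ∪ {A.negTerm, B.negTerm}
          with hΓ'def
        refine IH hL' hw' hne' Γ' ?_ (PTree.node Γ' t g) rfl ?_ ?_ |>.imp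
          fun t' ⟨h1, h2, h3, h4⟩ => ⟨h1, h2, h3, by
            simp only [PTree.size] at h4 ⊢; simp [hg4] at h4 ⊢; omega⟩
        · intro T hT
          rcases Finset.mem_union.mp hT with h | h
          · have hT' := Finset.mem_of_mem_erase h
            obtain ⟨C', hC', rfl⟩ := hΓ T hT'
            rcases (by simpa using hC' : C' ∈ L' ∨ C' = C) with h2 | rfl
            · exact ⟨C', h2, rfl⟩
            · exact absurd rfl (Finset.ne_of_mem_erase h)
          · rcases Finset.mem_insert.mp h with rfl | h
            · exact ⟨A, hAmem, rfl⟩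
            · exact ⟨B, hBmem, Finset.mem_singleton.mp h⟩
        · refine ⟨hok, hg2, PClause.negTerm C, Γ.erase (PClause.negTerm C),
            {A.negTerm, B.negTerm}, hTne, ?_, ?_, rfl⟩
          · rw [ht, Finset.insert_erase hmem]
          · rw [hg1, negLits_negTerm]
        · intro D hD
          rcases (by simpa [PTree.labels] using hD :
              D = Γ' ∨ D ∈ t.labels ∨ D ∈ g.labels) with rfl | h | h
          · intro T hT
            rcases Finset.mem_union.mp hT with h | h
            · exact hΓw T (Finset.mem_of_mem_erase h)
            · rcases Finset.mem_insert.mp h with rfl | h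
              · rw [card_negTerm]; exact hw' A hAmem
              · rw [Finset.mem_singleton.mp h, card_negTerm]; exact hw' B hBmem
          · exact hlab D h
          · exact hg3 D h
    · -- the clause C is not needed: skip it
      have hΓ' : ∀ T ∈ Γ, ∃ C' ∈ L', T = PClause.negTerm C' := by
        intro T hT
        obtain ⟨C', hC', rfl⟩ := hΓ T hT
        rcases (by simpa using hC' : C' ∈ L' ∨ C' = C) with h | rfl
        · exact ⟨C', h, rfl⟩
        · exact absurd hT hmem
      obtain ⟨t', h1, h2, h3, h4⟩ := IH hL' hw' hne' Γ hΓ' t ht hok hlab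
      exact ⟨t', h1, h2, h3, by simp at h4 ⊢; omega⟩

/-- If a CNF `F` has a resolution refutation of width `w` and size `S`,
then `F` has a tree-like Res(w) refutation with at most `5·S` nodes. -/
theorem tree_res_of_narrow_res
    (w S : ℕ) (F : PCnf) (π : List PClause)
    (hπ : ResDerivOf F ∅ π) (hw : ∀ C ∈ π, C.card ≤ w) (hS : π.length = S) :
    ∃ t : PTree, TreeResRefutation F w t ∧ t.size ≤ 5 * S := by
  classical
  obtain ⟨hderiv, hlast⟩ := hπ
  have hmemπ : (∅ : PClause) ∈ π := List.mem_of_getLast? hlast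
  have hS1 : 1 ≤ S := by
    rw [← hS]
    rcases π with _ | _
    · simp at hmemπ
    · simp
  have hex : ∃ i, ∃ h : i < π.length, π.get ⟨i, h⟩ = ∅ := by
    obtain ⟨⟨i, hi⟩, h⟩ := List.mem_iff_get.mp hmemπ
    exact ⟨i, hi, h⟩
  set i₀ := Nat.find hex with hi₀def
  obtain ⟨hi₀lt, hget0⟩ := Nat.find_spec hex
  set L := π.take i₀ with hLdef
  have hLlen : L.length = i₀ := by
    rw [hLdef, List.length_take]
    omega
  have hLget : ∀ (i : ℕ) (h : i < L.length), L.get ⟨i, h⟩ =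
      π.get ⟨i, by rw [hLlen] at h; omega⟩ := by
    intro i h
    simp [hLdef, List.getElem_take]
  have hLsub : ∀ C ∈ L, C ∈ π := fun C h => List.mem_of_mem_take h
  have hw' : ∀ C ∈ L, C.card ≤ w := fun C h => hw C (hLsub C h)
  have hne' : ∀ C ∈ L, C ≠ ∅ := by
    intro C hC hCemp
    obtain ⟨⟨i, hi⟩, hCi⟩ := List.mem_iff_get.mp hC
    have hpi := (hLget i hi).symm.trans (hCi.trans hCemp)
    have hilt : i < i₀ := by rw [hLlen] at hi; omega
    exact Nat.find_min hex hilt ⟨by omega, hpi⟩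
  have hL : ∀ i : Fin L.length, L.get i ∈ F ∨ ResStep (L.take i) (L.get i) := by
    intro ⟨i, hi⟩
    have h := hderiv ⟨i, by rw [hLlen] at hi; omega⟩
    have htake : L.take i = π.take i := by
      rw [hLdef, List.take_take]
      congr 1
      rw [hLlen] at hi
      omega
    rw [← hLget i hi] at h
    rw [htake]
    exact h
  have hstep := hderiv ⟨i₀, hi₀lt⟩
  rw [hget0] at hstep
  rcases hstep with hF | hres
  · -- the empty clause is in F
    refine ⟨PTree.leaf (PClause.toDnf ∅), ⟨⟨Or.inl (Finset.mem_image_of_mem _ hF), ?_⟩, ?_⟩, ?_⟩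
    · intro D hD
      have : D = PClause.toDnf ∅ := by simpa [PTree.labels] using hD
      rw [this]
      intro T hT
      simp [PClause.toDnf] at hT
    · show PClause.toDnf ∅ = ∅
      simp [PClause.toDnf]
    · show 1 ≤ 5 * S
      omega
  · obtain ⟨A, hAmem, B, hBmem, x, hxA, hxB, hCeq⟩ := hres
    have hAL : A ∈ L := hAmem
    have hBL : B ∈ L := hBmem
    obtain ⟨g, hg1, hg2, hg3, hg4⟩ := gadget_lemma w F.toHyps x A B ∅ hxA hxB hCeq
      (hw' A hAL) (hw' B hBL) (by simp)
    have hg1' : g.concl = {A.negTerm, B.negTerm} := by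
      rw [hg1]
      simp [PClause.toDnf]
    obtain ⟨t', h1, h2, h3, h4⟩ := chain_lemma w F L hL hw' hne'
      {A.negTerm, B.negTerm}
      (by
        intro T hT
        rcases Finset.mem_insert.mp hT with rfl | h
        · exact ⟨A, hAL, rfl⟩
        · exact ⟨B, hBL, Finset.mem_singleton.mp h⟩)
      g hg1' hg2 hg3
    refine ⟨t', ⟨⟨h2, h3⟩, h1⟩, ?_⟩
    have : i₀ ≤ S - 1 := by omega
    rw [hg4, hLlen] at h4
    omega
end

section
/- Let F be a k-CNF and let l_1,…,l_s be literals. Suppose that for each 1 ≤ i ≤ s there is a Resolution derivation from F of the unit clause l_i of width at most w, and suppose that the restricted formula F|_{l_1=1,…,l_s=1} has a Resolution refutation of width at most w. Then F has a Resolution refutation of width at most max{w, k}. -/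
section Aux

/-- Clauses derivable from `F` with all clauses of width at most `K`. -/
inductive Drv (F : PCnf) (K : ℕ) : PClause → Prop
  | ax {C : PClause} : C ∈ F → C.card ≤ K → Drv F K C
  | res {A B : PClause} {x : PVar} :
      Drv F K A → Drv F K B → (x, true) ∈ A → (x, false) ∈ B →
      (A.erase (x, true) ∪ B.erase (x, false)).card ≤ K →
      Drv F K (A.erase (x, true) ∪ B.erase (x, false))

lemma resStep_mono {p q : List PClause} (h : ∀ x ∈ p, x ∈ q) {C : PClause}
    (hC : ResStep p C) : ResStep q C := by
  obtain ⟨A, hA, B, hB, x, h1, h2, h3⟩ := hC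
  exact ⟨A, h A hA, B, h B hB, x, h1, h2, h3⟩

lemma isResDeriv_append {F : PCnf} {π₁ π₂ : List PClause}
    (h₁ : IsResDeriv F π₁) (h₂ : IsResDeriv F π₂) : IsResDeriv F (π₁ ++ π₂) := by
  intro i
  rcases lt_or_ge (i : ℕ) π₁.length with h | h
  · have hg : (π₁ ++ π₂).get i = π₁.get ⟨i, h⟩ := by
      simp [List.getElem_append_left h]
    rw [hg]
    rcases h₁ ⟨i, h⟩ with hc | hc
    · exact Or.inl hc
    · refine Or.inr (resStep_mono ?_ hc)
      intro x hx
      rw [List.take_append]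
      exact List.mem_append_left _ hx
  · have hlen : (i : ℕ) - π₁.length < π₂.length := by
      have := i.isLt; simp at this; omega
    have hg : (π₁ ++ π₂).get i = π₂.get ⟨(i : ℕ) - π₁.length, hlen⟩ := by
      simp [List.getElem_append_right h]
    rw [hg]
    rcases h₂ ⟨(i : ℕ) - π₁.length, hlen⟩ with hc | hc
    · exact Or.inl hc
    · refine Or.inr (resStep_mono ?_ hc)
      intro x hx
      have hi : (i : ℕ) = π₁.length + ((i : ℕ) - π₁.length) := by omega
      rw [hi, List.take_append, Nat.add_sub_cancel_left]
      exact List.mem_append_right _ hx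

lemma isResDeriv_snoc {F : PCnf} {π : List PClause} {C : PClause}
    (h : IsResDeriv F π) (hC : ResStep π C) : IsResDeriv F (π ++ [C]) := by
  intro i
  rcases lt_or_ge (i : ℕ) π.length with hlt | hge
  · have hg : (π ++ [C]).get i = π.get ⟨i, hlt⟩ := by
      simp [List.getElem_append_left hlt]
    rw [hg]
    rcases h ⟨i, hlt⟩ with hc | hc
    · exact Or.inl hc
    · refine Or.inr (resStep_mono ?_ hc)
      intro x hx
      rw [List.take_append]
      exact List.mem_append_left _ hx
  · have hi : (i : ℕ) = π.length := by have := i.isLt; simp at this; omega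
    have hg : (π ++ [C]).get i = C := by
      rw [List.get_eq_getElem, List.getElem_append_right (le_of_eq hi.symm)]
      simp [hi]
    rw [hg]
    refine Or.inr (resStep_mono ?_ hC)
    intro x hx
    rw [hi, List.take_left]
    exact hx

lemma mem_of_getLast?' {α} {L : List α} {a : α} (h : L.getLast? = some a) : a ∈ L := by
  cases L with
  | nil => simp at h
  | cons b t =>
    rw [List.getLast?_eq_getLast (l := b :: t) (by simp)] at h
    exact (Option.some_injective _ h) ▸ List.getLast_mem _

lemma drv_to_list {F : PCnf} {K : ℕ} {C : PClause} (h : Drv F K C) :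
    ∃ π : List PClause, IsResDeriv F π ∧ π.getLast? = some C ∧ ∀ D ∈ π, D.card ≤ K := by
  induction h with
  | ax hC hcard =>
    exact ⟨[_], fun i => Or.inl (by simpa using hC), rfl, by simpa using hcard⟩
  | @res A B x hA hB hxA hxB hcard ihA ihB =>
    obtain ⟨πA, hπA, hlastA, hwA⟩ := ihA
    obtain ⟨πB, hπB, hlastB, hwB⟩ := ihB
    refine ⟨(πA ++ πB) ++ [A.erase (x, true) ∪ B.erase (x, false)], ?_, ?_, ?_⟩
    · refine isResDeriv_snoc (isResDeriv_append hπA hπB) ?_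
      exact ⟨_, by simp [mem_of_getLast?' hlastA], _,
        by simp [mem_of_getLast?' hlastB], _, hxA, hxB, rfl⟩
    · simp
    · intro D hD
      simp only [List.mem_append, List.mem_singleton] at hD
      rcases hD with (hD | hD) | rfl
      · exact hwA D hD
      · exact hwB D hD
      · exact hcard

lemma sim {F G : PCnf} {K : ℕ} {π : List PClause} (hπ : IsResDeriv G π)
    (hw : ∀ D ∈ π, D.card ≤ K)
    (hax : ∀ D ∈ G, Drv F K D) :
    ∀ D ∈ π, Drv F K D := by
  suffices H : ∀ i (h : i < π.length), Drv F K π[i] by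
    intro D hD
    rw [List.mem_iff_getElem] at hD
    obtain ⟨i, hi, rfl⟩ := hD
    exact H i hi
  intro i
  induction i using Nat.strong_induction_on with
  | _ i ih =>
    intro hi
    rcases hπ ⟨i, hi⟩ with hc | hc
    · exact hax _ hc
    · obtain ⟨A, hA, B, hB, x, h1, h2, h3⟩ := hc
      rw [List.mem_take_iff_getElem] at hA hB
      obtain ⟨jA, hjA, rfl⟩ := hA
      obtain ⟨jB, hjB, rfl⟩ := hB
      have hjA' := lt_min_iff.mp hjA
      have hjB' := lt_min_iff.mp hjB
      have dA := ih jA hjA'.1 hjA'.2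
      have dB := ih jB hjB'.1 hjB'.2
      simp only [List.get_eq_getElem] at h3
      rw [h3]
      exact Drv.res dA dB h1 h2 (h3 ▸ hw _ (π.getElem_mem hi))

end Aux

lemma restrict_drv {F : PCnf} {k K : ℕ} (hF : ∀ C ∈ F, C.card ≤ k) (hk : k ≤ K)
    (ρ : PAssign)
    (hneg : ∀ (m : PLit), ρ m.1 = some (!m.2) → Drv F K {(m.1, !m.2)}) :
    ∀ D ∈ F.restrict ρ, Drv F K D := by
  classical
  intro D hD
  rw [PCnf.restrict, Finset.mem_image] at hD
  obtain ⟨C, hC, rfl⟩ := hD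
  have hCF : C ∈ F := (Finset.mem_filter.mp hC).1
  set pp : PLit → Prop := fun m => ρ m.1 ≠ some (!m.2) with hpp
  set Sf : Finset PLit := C.filter (fun m => ρ m.1 = some (!m.2)) with hSf
  have hCsplit : C.filter pp ∪ Sf = C := by
    ext m
    simp only [Finset.mem_union, Finset.mem_filter, hpp, hSf]
    tauto
  have hEC : ∀ S : Finset PLit, C.filter pp ∪ (Sf \ S) ⊆ C := by
    intro S
    refine Finset.union_subset (Finset.filter_subset _ _) ?_
    exact subset_trans (Finset.sdiff_subset) (Finset.filter_subset _ _)
  have main : ∀ S : Finset PLit, S ⊆ Sf → Drv F K (C.filter pp ∪ (Sf \ S)) := by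
    intro S
    induction S using Finset.induction_on with
    | empty =>
      intro _
      rw [Finset.sdiff_empty, hCsplit]
      exact Drv.ax hCF (le_trans (hF C hCF) hk)
    | @insert a S ha ih =>
      intro hsub
      have hS : S ⊆ Sf := subset_trans (Finset.subset_insert a S) hsub
      have hE := ih hS
      have haSf : a ∈ Sf := hsub (Finset.mem_insert_self a S)
      have hfa : ρ a.1 = some (!a.2) := (Finset.mem_filter.mp haSf).2
      have hu := hneg a hfa
      have haE : a ∈ C.filter pp ∪ (Sf \ S) :=
        Finset.mem_union_right _ (Finset.mem_sdiff.mpr ⟨haSf, ha⟩)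
      have hnotD : a ∉ C.filter pp := by
        intro h
        exact (Finset.mem_filter.mp h).2 hfa
      have herase : (C.filter pp ∪ (Sf \ S)).erase a = C.filter pp ∪ (Sf \ insert a S) := by
        ext m
        by_cases hm : m = a
        · subst hm
          simp [hnotD, ha]
        · simp [Finset.mem_erase, hm]
      obtain ⟨v, b⟩ := a
      cases b with
      | true =>
        have hu' : Drv F K ({((v : PVar), false)} : PClause) := by simpa using hu
        have hEq : (C.filter pp ∪ (Sf \ S)).erase (v, true) ∪
            (({((v : PVar), false)} : PClause).erase (v, false)) =
            C.filter pp ∪ (Sf \ insert (v, true) S) := by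
          rw [Finset.erase_singleton, Finset.union_empty, herase]
        have hcard : ((C.filter pp ∪ (Sf \ S)).erase (v, true) ∪
            (({((v : PVar), false)} : PClause).erase (v, false))).card ≤ K := by
          rw [hEq]
          exact le_trans (le_trans (Finset.card_le_card (hEC _)) (hF C hCF)) hk
        have hres := Drv.res hE hu' haE (by simp) hcard
        rwa [hEq] at hres
      | false =>
        have hu' : Drv F K ({((v : PVar), true)} : PClause) := by simpa using hu
        have hEq : (({((v : PVar), true)} : PClause).erase (v, true)) ∪
            (C.filter pp ∪ (Sf \ S)).erase (v, false) =
            C.filter pp ∪ (Sf \ insert (v, false) S) := by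
          rw [Finset.erase_singleton, Finset.empty_union, herase]
        have hcard : ((({((v : PVar), true)} : PClause).erase (v, true)) ∪
            (C.filter pp ∪ (Sf \ S)).erase (v, false)).card ≤ K := by
          rw [hEq]
          exact le_trans (le_trans (Finset.card_le_card (hEC _)) (hF C hCF)) hk
        have hres := Drv.res hu' hE (by simp) haE hcard
        rwa [hEq] at hres
  have hfin := main Sf (le_refl Sf)
  rwa [Finset.sdiff_self, Finset.union_empty] at hfin
/-- Let `F` be a `k`-CNF and `ls = l₁, …, l_s` literals.  If for each `i`
there is a resolution derivation from `F` of the unit clause `lᵢ` of width at most `w`,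
and the restriction `F|_{l₁=1,…,l_s=1}` has a resolution refutation of width at most `w`,
then `F` has a resolution refutation of width at most `max w k`. -/
theorem refutation_from_unit_clauses
    (k w : ℕ) (F : PCnf) (hF : ∀ C ∈ F, C.card ≤ k)
    (ls : List PLit)
    (hunit : ∀ m ∈ ls, ∃ π : List PClause, ResDerivOf F {m} π ∧ ∀ C ∈ π, C.card ≤ w)
    (href : ∃ π : List PClause,
      ResDerivOf (F.restrict (fun v => (ls.find? (fun m => m.1 == v)).map (·.2))) ∅ π ∧
      ∀ C ∈ π, C.card ≤ w) :
    ∃ π : List PClause, ResDerivOf F ∅ π ∧ ∀ C ∈ π, C.card ≤ max w k := by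
  classical
  have hax : ∀ D ∈ F, Drv F (max w k) D :=
    fun D hD => Drv.ax hD (le_trans (hF D hD) (le_max_right w k))
  have hunitD : ∀ m ∈ ls, Drv F (max w k) {m} := by
    intro m hm
    obtain ⟨π, ⟨hd, hlast⟩, hwid⟩ := hunit m hm
    exact sim hd (fun D hD => le_trans (hwid D hD) (le_max_left w k)) hax _
      (mem_of_getLast?' hlast)
  have hneg : ∀ (m : PLit),
      (ls.find? (fun l => l.1 == m.1)).map (·.2) = some (!m.2) →
      Drv F (max w k) {(m.1, !m.2)} := by
    intro m hm
    rw [Option.map_eq_some_iff] at hm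
    obtain ⟨l, hfind, hl2⟩ := hm
    have hmem : l ∈ ls := List.mem_of_find?_eq_some hfind
    have hpred := List.find?_some hfind
    have hleq : l = (m.1, !m.2) := Prod.ext (by simpa using hpred) hl2
    exact hleq ▸ hunitD l hmem
  obtain ⟨π, ⟨hd, hlast⟩, hwπ⟩ := href
  have hres := restrict_drv hF (le_max_right w k)
    (fun v => (ls.find? (fun m => m.1 == v)).map (·.2)) hneg
  have hall := sim hd (fun D hD => le_trans (hwπ D hD) (le_max_left w k)) hres
  have h0 : Drv F (max w k) ∅ := hall _ (mem_of_getLast?' hlast)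
  obtain ⟨π', h1, h2, h3⟩ := drv_to_list h0
  exact ⟨π', ⟨h1, h2⟩, h3⟩
end
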